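/- Let k ≥ 2 and let F ⊆ P(X) be a saturated k-Sperner system on a finite set X with |X| = n > 2^{|F|}, of minimum cardinality among all saturated k-Sperner systems in P(X), with homogeneous atom H and canonical decomposition (A_i)_{i=0}^{k-1}. Then A₀ = {∅}, A_{k-1} = {X}, and for every i ∈ {1,…,k−2}: every small member A ∈ A_i^small satisfies |A| ≥ i, and every large member A ∈ A_i^large satisfies |A| ≤ i + n − (k−1). -/

import Mathlib

open Finset

/-- A family contains a chain of `m` sets `C 0 ⊊ C 1 ⊊ ⋯ ⊊ C (m-1)`. -/
def HasChainOfLen {α : Type*} [DecidableEq α] (F : Finset (Finset α)) (m : ℕ) : Prop :=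
  ∃ C : Fin m → Finset α, StrictMono C ∧ ∀ i, C i ∈ F

/-- `F ⊆ P(X)` is a saturated `k`-Sperner system: it has no chain of `k+1` sets,
and adding any `S ⊆ X` with `S ∉ F` creates a chain of `k+1` sets. -/
def IsSatKSperner {α : Type*} [DecidableEq α] (X : Finset α) (F : Finset (Finset α))
    (k : ℕ) : Prop :=
  (∀ A ∈ F, A ⊆ X) ∧ ¬ HasChainOfLen F (k + 1) ∧
    ∀ S ⊆ X, S ∉ F → HasChainOfLen (insert S F) (k + 1)

/-- `H` is a homogeneous atom for `F` in `P(X)`: `H ⊆ X` is maximal with the property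
that every member of `F` contains all of `H` or none of it, and `|H| ≥ 2`. -/
def IsHomogAtom {α : Type*} [DecidableEq α] (X : Finset α) (F : Finset (Finset α))
    (H : Finset α) : Prop :=
  H ⊆ X ∧ (∀ S ∈ F, S ∩ H = ∅ ∨ S ∩ H = H) ∧
    (∀ B ⊆ X, (∀ S ∈ F, S ∩ B = ∅ ∨ S ∩ B = B) → H ⊆ B → H = B) ∧
    2 ≤ H.card

/-- The small members of `F` (those disjoint from the homogeneous atom `H`). -/
def smallSets {α : Type*} [DecidableEq α] (F : Finset (Finset α)) (H : Finset α) :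
    Finset (Finset α) :=
  F.filter fun S => S ∩ H = ∅

/-- The large members of `F` (those containing the homogeneous atom `H`). -/
def largeSets {α : Type*} [DecidableEq α] (F : Finset (Finset α)) (H : Finset α) :
    Finset (Finset α) :=
  F.filter fun S => H ⊆ S

/-- The minimal elements (under inclusion) of a family of sets. -/
def minimalsIn {α : Type*} [DecidableEq α] (G : Finset (Finset α)) : Finset (Finset α) :=
  G.filter fun A => ∀ B ∈ G, B ⊆ A → B = A

/-- What remains of `F` after stripping off minimal elements `i` times. -/
def canonRest {α : Type*} [DecidableEq α] (F : Finset (Finset α)) : ℕ → Finset (Finset α)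
  | 0 => F
  | i + 1 => canonRest F i \ minimalsIn (canonRest F i)

/-- The canonical decomposition of `F` into antichains:
`canonDecomp F i` is the family of minimal elements of `F \ ⋃_{j<i} canonDecomp F j`. -/
def canonDecomp {α : Type*} [DecidableEq α] (F : Finset (Finset α)) (i : ℕ) :
    Finset (Finset α) :=
  minimalsIn (canonRest F i)

/-- A sequence `(D i)_{i=0}^t` of families is layered if for `1 ≤ i ≤ t`,
every member of `D i` strictly contains some member of `D (i-1)`. -/
def Layered {α : Type*} [DecidableEq α] (D : ℕ → Finset (Finset α)) (t : ℕ) : Prop :=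
  ∀ i, 1 ≤ i → i ≤ t → ∀ A ∈ D i, ∃ B ∈ D (i - 1), B ⊂ A
section Aux
variable {α : Type*} [DecidableEq α]

lemma strictMono_of_adj {M : ℕ} (f : Fin M → Finset α)
    (h : ∀ i : ℕ, ∀ hi : i + 1 < M, f ⟨i, by omega⟩ ⊂ f ⟨i + 1, hi⟩) : StrictMono f := by
  have key : ∀ n a : ℕ, ∀ ha : a + n + 1 < M, f ⟨a, by omega⟩ ⊂ f ⟨a + n + 1, ha⟩ := by
    intro n
    induction n with
    | zero => intro a ha; exact h a ha
    | succ n ih =>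
      intro a ha
      exact (ih a (by omega)).trans (by
        have := h (a + n + 1) (by omega)
        convert this using 3 <;> omega)
  intro a b hab
  have hv : (a : ℕ) < b := hab
  have h2 := key ((b : ℕ) - a - 1) a (by omega)
  have e1 : (⟨(a : ℕ), by omega⟩ : Fin M) = a := by ext; rfl
  have e2 : (⟨(a : ℕ) + ((b : ℕ) - a - 1) + 1, by omega⟩ : Fin M) = b := by
    ext; simp; omega
  rw [e1, e2] at h2
  exact h2

lemma chain_card_add_le {M : ℕ} {f : Fin M → Finset α} (hf : StrictMono f)
    (a b : Fin M) (hab : a ≤ b) : (f a).card + ((b : ℕ) - a) ≤ (f b).card := by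
  have key : ∀ n a : ℕ, ∀ hh : a + n < M, (f ⟨a, by omega⟩).card + n ≤ (f ⟨a + n, hh⟩).card := by
    intro n
    induction n with
    | zero => intro a hh; simp
    | succ n ih =>
      intro a hh
      have h1 := ih a (by omega)
      have h2 : f ⟨a + n, by omega⟩ ⊂ f ⟨a + n + 1, by omega⟩ := hf (by
        rw [Fin.mk_lt_mk]; omega)
      have h3 := Finset.card_lt_card h2
      have e : f ⟨a + (n+1), hh⟩ = f ⟨a + n + 1, by omega⟩ := rfl
      rw [e]
      omega
  have h4 := key ((b : ℕ) - a) a (by omega)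
  have e1 : (⟨(a : ℕ), by omega⟩ : Fin M) = a := by ext; rfl
  have e2 : (⟨(a : ℕ) + ((b : ℕ) - a), by omega⟩ : Fin M) = b := by ext; simp; omega
  rw [e1, e2] at h4
  exact h4

lemma mem_minimalsIn {G : Finset (Finset α)} {A : Finset α} :
    A ∈ minimalsIn G ↔ A ∈ G ∧ ∀ B ∈ G, B ⊆ A → B = A := by
  simp [minimalsIn]

lemma canonRest_subset_self (F : Finset (Finset α)) (i : ℕ) : canonRest F i ⊆ F := by
  induction i with
  | zero => exact Finset.Subset.refl _
  | succ i ih => exact (Finset.sdiff_subset).trans ih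

lemma canonRest_anti (F : Finset (Finset α)) {i j : ℕ} (hij : i ≤ j) :
    canonRest F j ⊆ canonRest F i := by
  induction j with
  | zero => simpa [Nat.le_zero.mp hij] using Finset.Subset.refl _
  | succ j ih =>
    rcases Nat.lt_or_ge i (j+1) with h | h
    · exact (Finset.sdiff_subset).trans (ih (by omega))
    · have : i = j + 1 := by omega
      subst this; exact Finset.Subset.refl _

lemma card_le_of_mem_canonRest {F : Finset (Finset α)} {i : ℕ} {A : Finset α}
    (hA : A ∈ canonRest F i) : i ≤ A.card := by
  induction i generalizing A with
  | zero => exact Nat.zero_le _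
  | succ i ih =>
    rw [canonRest, Finset.mem_sdiff] at hA
    obtain ⟨h1, h2⟩ := hA
    rw [mem_minimalsIn] at h2
    push_neg at h2
    obtain ⟨B, hB1, hB2, hB3⟩ := h2 h1
    have := ih hB1
    have : B ⊂ A := ⟨hB2, fun hc => hB3 (Finset.Subset.antisymm hB2 hc)⟩
    have := Finset.card_lt_card this
    omega

lemma step_up_canonRest (F : Finset (Finset α)) :
    ∀ i : ℕ, ∀ {A B : Finset α},
      A ∈ canonRest F i → B ∈ F → A ⊂ B → B ∈ canonRest F (i+1) := by
  intro i
  induction i with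
  | zero =>
    intro A B hA hB hAB
    rw [canonRest, Finset.mem_sdiff]
    refine ⟨hB, fun hc => ?_⟩
    rw [mem_minimalsIn] at hc
    exact hAB.ne (hc.2 A hA hAB.subset)
  | succ i ih =>
    intro A B hA hB hAB
    have hA' : A ∈ canonRest F i := by
      rw [canonRest, Finset.mem_sdiff] at hA; exact hA.1
    have hB' : B ∈ canonRest F (i+1) := ih hA' hB hAB
    rw [canonRest, Finset.mem_sdiff]
    refine ⟨hB', fun hc => ?_⟩
    rw [mem_minimalsIn] at hc
    exact hAB.ne (hc.2 A hA hAB.subset)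

lemma chain_to_canonRest {F : Finset (Finset α)} {m : ℕ} {A : Finset α}
    (C : Fin m → Finset α) (hC : StrictMono C) (hCF : ∀ j, C j ∈ F)
    (hCA : ∀ j, C j ⊂ A) (hA : A ∈ F) : A ∈ canonRest F m := by
  induction m generalizing A with
  | zero => exact hA
  | succ m ih =>
    have hlast : C ⟨m, by omega⟩ ∈ canonRest F m := by
      apply ih (fun j : Fin m => C ⟨j, by omega⟩)
      · exact fun a b hab => hC (by rw [Fin.mk_lt_mk]; exact hab)
      · exact fun j => hCF _
      · exact fun j => hC (show (⟨j, by omega⟩ : Fin (m+1)) < ⟨m, by omega⟩ by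
          rw [Fin.mk_lt_mk]; exact j.isLt)
      · exact hCF _
    exact step_up_canonRest F m hlast hA (hCA _)

lemma canonRest_to_chain {F : Finset (Finset α)} {i : ℕ} {A : Finset α}
    (hA : A ∈ canonRest F i) :
    ∃ C : Fin i → Finset α, StrictMono C ∧ (∀ j, C j ∈ F) ∧ ∀ j, C j ⊂ A := by
  induction i generalizing A with
  | zero => exact ⟨Fin.elim0, fun a => a.elim0, fun a => a.elim0, fun a => a.elim0⟩
  | succ i ih =>
    rw [canonRest, Finset.mem_sdiff] at hA
    obtain ⟨h1, h2⟩ := hA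
    rw [mem_minimalsIn] at h2
    push_neg at h2
    obtain ⟨B, hB1, hB2, hB3⟩ := h2 h1
    have hBA : B ⊂ A := ⟨hB2, fun hc => hB3 (Finset.Subset.antisymm hB2 hc)⟩
    obtain ⟨C, hC1, hC2, hC3⟩ := ih hB1
    refine ⟨fun j => if h : (j : ℕ) < i then C ⟨j, h⟩ else B, ?_, ?_, ?_⟩
    · apply strictMono_of_adj
      intro t ht
      by_cases h1 : t + 1 < i
      · simp only [dif_pos h1, dif_pos (by omega : t < i)]
        exact hC1 (by rw [Fin.mk_lt_mk]; omega)
      · have ht1 : t + 1 = i := by omega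
        simp only [dif_neg (by omega : ¬ (t + 1 < i)), dif_pos (by omega : t < i)]
        exact hC3 _
    · intro j
      by_cases h : (j : ℕ) < i
      · simp only [dif_pos h]; exact hC2 _
      · simp only [dif_neg h]; exact canonRest_subset_self F i hB1
    · intro j
      by_cases h : (j : ℕ) < i
      · simp only [dif_pos h]; exact (hC3 _).trans hBA
      · simp only [dif_neg h]; exact hBA

end Aux
section Aux2
set_option linter.unusedSectionVars false
variable {α : Type*} [DecidableEq α]

lemma sat_chain {F : Finset (Finset α)} {k : ℕ} (hno : ¬ HasChainOfLen F (k+1))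
    {S : Finset α} (hch : HasChainOfLen (insert S F) (k+1)) :
    ∃ (W : Fin (k+1) → Finset α) (t : Fin (k+1)), StrictMono W ∧
      (∀ j, W j = S ∨ W j ∈ F) ∧ W t = S := by
  obtain ⟨W, hW1, hW2⟩ := hch
  have hmem : ∀ j, W j = S ∨ W j ∈ F := by
    intro j; rcases Finset.mem_insert.mp (hW2 j) with h | h
    · exact Or.inl h
    · exact Or.inr h
  by_cases ht : ∃ t, W t = S
  · obtain ⟨t, ht⟩ := ht; exact ⟨W, t, hW1, hmem, ht⟩
  · push_neg at ht
    exact absurd ⟨W, hW1, fun j => (hmem j).resolve_left (ht j)⟩ hno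

lemma chain_through {F : Finset (Finset α)} {k : ℕ} (hk : 1 ≤ k)
    (hno : ¬ HasChainOfLen F (k+1))
    {S A : Finset α} (W : Fin (k+1) → Finset α) (t : Fin (k+1))
    (hW : StrictMono W) (hmem : ∀ j, W j = S ∨ W j ∈ F) (hWt : W t = S)
    (hbelow : ∀ j, j < t → W j ⊆ A) (habove : ∀ j, t < j → A ⊆ W j)
    (hA : A ∈ F) (hSA : S ≠ A) :
    ∃ C : Fin k → Finset α, StrictMono C ∧ (∀ i, C i ∈ F) ∧ ∃ t', C t' = A := by
  have hinj := hW.injective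
  have hmemF : ∀ j, j ≠ t → W j ∈ F := by
    intro j hj
    refine (hmem j).resolve_left fun hc => hj (hinj (hc.trans hWt.symm))
  by_cases hex : ∃ j, j ≠ t ∧ W j = A
  · obtain ⟨j0, hj0t, hj0⟩ := hex
    -- drop index t
    refine ⟨fun i => if h : (i : ℕ) < (t : ℕ) then W ⟨i, by omega⟩ else W ⟨(i : ℕ) + 1, by omega⟩,
      ?_, ?_, ?_⟩
    · apply strictMono_of_adj
      intro i hi
      by_cases h1 : i + 1 < (t : ℕ)
      · simp only [dif_pos h1, dif_pos (by omega : i < (t : ℕ))]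
        exact hW (by rw [Fin.mk_lt_mk]; omega)
      · by_cases h2 : i < (t : ℕ)
        · simp only [dif_neg h1, dif_pos h2]
          exact hW (by rw [Fin.mk_lt_mk]; omega)
        · simp only [dif_neg h1, dif_neg h2]
          exact hW (by rw [Fin.mk_lt_mk]; omega)
    · intro i
      by_cases h : (i : ℕ) < (t : ℕ)
      · simp only [dif_pos h]
        exact hmemF _ (by intro hc; have hv : (i : ℕ) = (t : ℕ) := congrArg Fin.val hc; omega)
      · simp only [dif_neg h]
        exact hmemF _ (by intro hc; have hv : (i : ℕ) + 1 = (t : ℕ) := congrArg Fin.val hc; omega)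
    · -- index containing A
      rcases Fin.lt_or_lt_of_ne hj0t with hlt | hlt
      · refine ⟨⟨(j0 : ℕ), by omega⟩, ?_⟩
        have : ((⟨(j0 : ℕ), by omega⟩ : Fin k) : ℕ) < (t : ℕ) := hlt
        simp only [dif_pos this]
        exact hj0
      · have hj0v : (t : ℕ) < (j0 : ℕ) := hlt
        refine ⟨⟨(j0 : ℕ) - 1, by omega⟩, ?_⟩
        have hnlt : ¬ (((⟨(j0 : ℕ) - 1, by omega⟩ : Fin k) : ℕ) < (t : ℕ)) := by
          simp; omega
        simp only [dif_neg hnlt]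
        have he : (⟨((⟨(j0 : ℕ) - 1, by omega⟩ : Fin k) : ℕ) + 1, by omega⟩ : Fin (k+1)) = j0 :=
          Fin.ext (show (j0 : ℕ) - 1 + 1 = (j0 : ℕ) by omega)
        rw [he]; exact hj0
  · push_neg at hex
    exfalso
    apply hno
    refine ⟨fun j => if j = t then A else W j, ?_, ?_⟩
    · apply strictMono_of_adj
      intro i hi
      by_cases h1 : (⟨i, by omega⟩ : Fin (k+1)) = t
      · have hne2 : (⟨i+1, hi⟩ : Fin (k+1)) ≠ t := by
          intro hc
          have hv1 : (i : ℕ) = (t : ℕ) := by rw [← h1]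
          have hv2 : (i : ℕ) + 1 = (t : ℕ) := by rw [← hc]
          omega
        simp only [if_pos h1, if_neg hne2]
        have h2 : t < (⟨i+1, hi⟩ : Fin (k+1)) := by rw [← h1, Fin.mk_lt_mk]; omega
        have h3 := habove _ h2
        exact Finset.ssubset_iff_subset_ne.mpr ⟨h3, fun hc => hex _ hne2 hc.symm⟩
      · simp only [if_neg h1]
        by_cases h2 : (⟨i+1, hi⟩ : Fin (k+1)) = t
        · simp only [if_pos h2]
          have h3 : (⟨i, by omega⟩ : Fin (k+1)) < t := by rw [← h2, Fin.mk_lt_mk]; omega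
          have h4 := hbelow _ h3
          exact Finset.ssubset_iff_subset_ne.mpr ⟨h4, fun hc => hex _ h1 hc⟩
        · simp only [if_neg h2]
          exact hW (by rw [Fin.mk_lt_mk]; omega)
    · intro j
      by_cases h : j = t
      · simp only [if_pos h]; exact hA
      · simp only [if_neg h]; exact hmemF _ h

lemma lies_on_k_chain {X : Finset α} {F : Finset (Finset α)} {k : ℕ} (hk : 2 ≤ k)
    (hsat : IsSatKSperner X F k) {H : Finset α} (hH : IsHomogAtom X F H)
    {A : Finset α} (hA : A ∈ F) :
    ∃ C : Fin k → Finset α, StrictMono C ∧ (∀ i, C i ∈ F) ∧ ∃ t, C t = A := by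
  obtain ⟨hFX, hno, hsatur⟩ := hsat
  obtain ⟨hHX, hatom, _, hHcard⟩ := hH
  obtain ⟨h, hh⟩ := Finset.card_pos.mp (by omega : 0 < H.card)
  have hAX := hFX A hA
  rcases hatom A hA with hsmall | hlarge
  · -- A ∩ H = ∅ : use S = insert h A
    have hhA : h ∉ A := fun hc => by
      have : h ∈ A ∩ H := Finset.mem_inter.mpr ⟨hc, hh⟩
      rw [hsmall] at this; exact absurd this (Finset.notMem_empty h)
    set S := insert h A with hSdef
    obtain ⟨h', hh', hne'⟩ := Finset.exists_mem_ne (s := H) (by omega) h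
    have hh'A : h' ∉ A := fun hc => by
      have : h' ∈ A ∩ H := Finset.mem_inter.mpr ⟨hc, hh'⟩
      rw [hsmall] at this; exact absurd this (Finset.notMem_empty h')
    have hSF : S ∉ F := by
      intro hc
      rcases hatom S hc with h1 | h1
      · have : h ∈ S ∩ H := Finset.mem_inter.mpr ⟨Finset.mem_insert_self _ _, hh⟩
        rw [h1] at this; exact absurd this (Finset.notMem_empty h)
      · have : h' ∈ S ∩ H := by rw [h1]; exact hh'
        have := Finset.mem_inter.mp this
        rcases Finset.mem_insert.mp this.1 with h2 | h2
        · exact hne' h2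
        · exact hh'A h2
    have hSX : S ⊆ X := Finset.insert_subset (hHX hh) hAX
    obtain ⟨W, t, hW, hmem, hWt⟩ := sat_chain hno (hsatur S hSX hSF)
    apply chain_through (by omega) hno W t hW hmem hWt
    · -- below: W j ⊆ A
      intro j hj
      have hjt : j ≠ t := Fin.ne_of_lt hj
      have hjF : W j ∈ F := (hmem j).resolve_left fun hc => hjt (hW.injective (hc.trans hWt.symm))
      have hjS : W j ⊂ S := hWt ▸ hW hj
      rcases hatom _ hjF with h1 | h1
      · intro b hb
        rcases Finset.mem_insert.mp (hjS.subset hb) with h2 | h2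
        · exfalso
          have : b ∈ W j ∩ H := Finset.mem_inter.mpr ⟨hb, h2 ▸ hh⟩
          rw [h1] at this; exact absurd this (Finset.notMem_empty b)
        · exact h2
      · exfalso
        have hHW : H ⊆ W j := by rw [← h1]; exact Finset.inter_subset_left
        have hHS : H ⊆ S := hHW.trans hjS.subset
        rcases Finset.mem_insert.mp (hHS hh') with h2 | h2
        · exact hne' h2
        · exact hh'A h2
    · intro j hj
      have : S ⊆ W j := (hWt ▸ hW hj).subset
      exact (Finset.subset_insert h A).trans this
    · exact hA
    · intro hc; exact hhA (hc ▸ Finset.mem_insert_self h A)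
  · -- H ⊆ A : use S = A.erase h
    have hHA : H ⊆ A := by
      intro x hx
      rw [← hlarge] at hx
      exact (Finset.mem_inter.mp hx).1
    have hhA : h ∈ A := hHA hh
    set S := A.erase h with hSdef
    obtain ⟨h', hh', hne'⟩ := Finset.exists_mem_ne (s := H) (by omega) h
    have hh'S : h' ∈ S := Finset.mem_erase.mpr ⟨hne', hHA hh'⟩
    have hSF : S ∉ F := by
      intro hc
      rcases hatom S hc with h1 | h1
      · have : h' ∈ S ∩ H := Finset.mem_inter.mpr ⟨hh'S, hh'⟩
        rw [h1] at this; exact absurd this (Finset.notMem_empty h')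
      · have h2 : h ∈ S ∩ H := by rw [h1]; exact hh
        exact absurd (Finset.mem_inter.mp h2).1 (Finset.notMem_erase h A)
    have hSX : S ⊆ X := (Finset.erase_subset h A).trans hAX
    obtain ⟨W, t, hW, hmem, hWt⟩ := sat_chain hno (hsatur S hSX hSF)
    apply chain_through (by omega) hno W t hW hmem hWt
    · intro j hj
      have : W j ⊆ S := (hWt ▸ hW hj).subset
      exact this.trans (Finset.erase_subset h A)
    · -- above: A ⊆ W j
      intro j hj
      have hjt : j ≠ t := Fin.ne_of_gt hj
      have hjF : W j ∈ F := (hmem j).resolve_left fun hc => hjt (hW.injective (hc.trans hWt.symm))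
      have hjS : S ⊂ W j := hWt ▸ hW hj
      rcases hatom _ hjF with h1 | h1
      · exfalso
        have : h' ∈ W j ∩ H := Finset.mem_inter.mpr ⟨hjS.subset hh'S, hh'⟩
        rw [h1] at this; exact absurd this (Finset.notMem_empty h')
      · have hHW : H ⊆ W j := by rw [← h1]; exact Finset.inter_subset_left
        intro a ha
        by_cases hah : a = h
        · exact hHW (hah ▸ hh)
        · exact hjS.subset (Finset.mem_erase.mpr ⟨hah, ha⟩)
    · exact hA
    · intro hc
      have : h ∈ A.erase h := by rw [hSdef] at hc; rw [hc]; exact hhA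
      exact (Finset.notMem_erase h A) this

end Aux2
section Aux3
set_option linter.unusedSectionVars false
variable {α : Type*} [DecidableEq α]

/-- The maximal elements (under inclusion) of a family of sets. -/
def maximalsIn (G : Finset (Finset α)) : Finset (Finset α) :=
  G.filter fun A => ∀ B ∈ G, A ⊆ B → B = A

lemma mem_maximalsIn {G : Finset (Finset α)} {A : Finset α} :
    A ∈ maximalsIn G ↔ A ∈ G ∧ ∀ B ∈ G, A ⊆ B → B = A := by
  simp [maximalsIn]

lemma exists_minimal_below {F : Finset (Finset α)} {A : Finset α} (hA : A ∈ F) :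
    ∃ M ∈ minimalsIn F, M ⊆ A := by
  obtain ⟨M, hM1, hM2⟩ := Finset.exists_min_image (F.filter (· ⊆ A)) Finset.card
    ⟨A, Finset.mem_filter.mpr ⟨hA, Finset.Subset.refl A⟩⟩
  rw [Finset.mem_filter] at hM1
  refine ⟨M, mem_minimalsIn.mpr ⟨hM1.1, ?_⟩, hM1.2⟩
  intro B hB hBM
  have hBf : B ∈ F.filter (· ⊆ A) := Finset.mem_filter.mpr ⟨hB, hBM.trans hM1.2⟩
  exact Finset.eq_of_subset_of_card_le hBM (hM2 B hBf)

lemma exists_maximal_above {F : Finset (Finset α)} {A : Finset α} (hA : A ∈ F) :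
    ∃ M ∈ maximalsIn F, A ⊆ M := by
  obtain ⟨M, hM1, hM2⟩ := Finset.exists_max_image (F.filter (A ⊆ ·)) Finset.card
    ⟨A, Finset.mem_filter.mpr ⟨hA, Finset.Subset.refl A⟩⟩
  rw [Finset.mem_filter] at hM1
  refine ⟨M, mem_maximalsIn.mpr ⟨hM1.1, ?_⟩, hM1.2⟩
  intro B hB hMB
  have hBf : B ∈ F.filter (A ⊆ ·) := Finset.mem_filter.mpr ⟨hB, hM1.2.trans hMB⟩
  exact (Finset.eq_of_subset_of_card_le hMB (hM2 B hBf)).symm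

lemma F_nonempty {X : Finset α} {F : Finset (Finset α)} {k : ℕ} (hk : 2 ≤ k)
    (hsat : IsSatKSperner X F k) : F.Nonempty := by
  by_cases h : ∅ ∈ F
  · exact ⟨∅, h⟩
  · obtain ⟨W, hW1, hW2⟩ := hsat.2.2 ∅ (Finset.empty_subset X) h
    have h01 : W ⟨0, by omega⟩ ⊂ W ⟨1, by omega⟩ := hW1 (by rw [Fin.mk_lt_mk]; omega)
    have : W ⟨1, by omega⟩ ≠ ∅ := by
      intro hc; rw [hc] at h01; exact Finset.not_ssubset_empty _ h01
    rcases Finset.mem_insert.mp (hW2 ⟨1, by omega⟩) with hc | hc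
    · exact absurd hc this
    · exact ⟨_, hc⟩

lemma exists_not_mem {X : Finset α} {F : Finset (Finset α)} {n : ℕ}
    (hn : X.card = n) (hbig : 2 ^ F.card < n) (hFX : ∀ A ∈ F, A ⊆ X) :
    ∃ S ⊆ X, S ∉ F := by
  by_contra hc
  push_neg at hc
  have hsub : X.powerset ⊆ F := fun S hS => hc S (Finset.mem_powerset.mp hS)
  have h1 : 2 ^ n ≤ F.card := by
    have := Finset.card_le_card hsub
    rwa [Finset.card_powerset, hn] at this
  have h2 : F.card < 2 ^ F.card := Nat.lt_two_pow_self
  have h3 : n < 2 ^ n := Nat.lt_two_pow_self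
  omega

lemma two_le_F_card {X : Finset α} {F : Finset (Finset α)} {k n : ℕ} (hk : 2 ≤ k)
    (hn : X.card = n) (hbig : 2 ^ F.card < n) (hsat : IsSatKSperner X F k) :
    2 ≤ F.card := by
  obtain ⟨S, hSX, hSF⟩ := exists_not_mem hn hbig hsat.1
  obtain ⟨W, hW1, hW2⟩ := hsat.2.2 S hSX hSF
  have hinj := hW1.injective
  have hne01 : W ⟨0, by omega⟩ ≠ W ⟨1, by omega⟩ := fun hc => by
    have := hinj hc; rw [Fin.ext_iff] at this; simp at this
  have hne02 : W ⟨0, by omega⟩ ≠ W ⟨2, by omega⟩ := fun hc => by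
    have := hinj hc; rw [Fin.ext_iff] at this; simp at this
  have hne12 : W ⟨1, by omega⟩ ≠ W ⟨2, by omega⟩ := fun hc => by
    have := hinj hc; rw [Fin.ext_iff] at this; simp at this
  have hm : ∀ j : Fin (k+1), W j = S ∨ W j ∈ F := fun j => Finset.mem_insert.mp (hW2 j)
  show 1 < F.card
  rw [Finset.one_lt_card]
  by_cases h0 : W ⟨0, by omega⟩ = S
  · refine ⟨_, (hm ⟨1, by omega⟩).resolve_left (fun hc => hne01 (h0.trans hc.symm)), _,
      (hm ⟨2, by omega⟩).resolve_left (fun hc => hne02 (h0.trans hc.symm)), hne12⟩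
  · by_cases h1 : W ⟨1, by omega⟩ = S
    · exact ⟨_, (hm ⟨0, by omega⟩).resolve_left h0, _,
        (hm ⟨2, by omega⟩).resolve_left (fun hc => hne12 (h1.trans hc.symm)), hne02⟩
    · exact ⟨_, (hm ⟨0, by omega⟩).resolve_left h0, _,
        (hm ⟨1, by omega⟩).resolve_left h1, hne01⟩

lemma hl_min {X : Finset α} {F : Finset (Finset α)} {k : ℕ} (hk : 2 ≤ k)
    (hsat : IsSatKSperner X F k) {H : Finset α} (hH : IsHomogAtom X F H)
    {A : Finset α} (hA : A ∈ minimalsIn F) :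
    ∃ C : Fin k → Finset α, StrictMono C ∧ (∀ i, C i ∈ F) ∧ C ⟨0, by omega⟩ = A := by
  obtain ⟨hAF, hAmin⟩ := mem_minimalsIn.mp hA
  obtain ⟨C, hC1, hC2, t, ht⟩ := lies_on_k_chain hk hsat hH hAF
  have ht0 : t = ⟨0, by omega⟩ := by
    by_contra hc
    have h0t : (⟨0, by omega⟩ : Fin k) < t := by
      rcases Fin.lt_or_lt_of_ne hc with h | h
      · exact absurd h (by rw [Fin.lt_def]; simp)
      · exact h
    have := hC1 h0t
    rw [ht] at this
    exact this.ne (hAmin _ (hC2 _) this.subset)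
  exact ⟨C, hC1, hC2, ht0 ▸ ht⟩

lemma hl_max {X : Finset α} {F : Finset (Finset α)} {k : ℕ} (hk : 2 ≤ k)
    (hsat : IsSatKSperner X F k) {H : Finset α} (hH : IsHomogAtom X F H)
    {A : Finset α} (hA : A ∈ maximalsIn F) :
    ∃ C : Fin k → Finset α, StrictMono C ∧ (∀ i, C i ∈ F) ∧ C ⟨k-1, by omega⟩ = A := by
  obtain ⟨hAF, hAmax⟩ := mem_maximalsIn.mp hA
  obtain ⟨C, hC1, hC2, t, ht⟩ := lies_on_k_chain hk hsat hH hAF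
  have ht0 : t = ⟨k-1, by omega⟩ := by
    by_contra hc
    have h0t : t < (⟨k-1, by omega⟩ : Fin k) := by
      rcases Fin.lt_or_lt_of_ne hc with h | h
      · exact h
      · exact absurd h (by rw [Fin.lt_def]; simp; omega)
    have := hC1 h0t
    rw [ht] at this
    exact this.ne ((hAmax _ (hC2 _) this.subset).symm)
  exact ⟨C, hC1, hC2, ht0 ▸ ht⟩

end Aux3
section Aux4
set_option linter.unusedSectionVars false
variable {α : Type*} [DecidableEq α]

lemma empty_mem_of_min {X : Finset α} {F : Finset (Finset α)} {k n : ℕ} (hk : 2 ≤ k)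
    (hn : X.card = n) (hbig : 2 ^ F.card < n)
    (hsat : IsSatKSperner X F k)
    (hmin : ∀ G : Finset (Finset α), IsSatKSperner X G k → F.card ≤ G.card)
    {H : Finset α} (hH : IsHomogAtom X F H) : ∅ ∈ F := by
  by_contra hE
  set G : Finset (Finset α) := insert ∅ (F \ minimalsIn F) with hGdef
  have hGX : ∀ A ∈ G, A ⊆ X := by
    intro A hA
    rcases Finset.mem_insert.mp hA with h | h
    · rw [h]; exact Finset.empty_subset X
    · exact hsat.1 A (Finset.mem_sdiff.mp h).1
  have hGsp : ¬ HasChainOfLen G (k+1) := by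
    rintro ⟨V, hV1, hV2⟩
    by_cases h0 : ∃ j, V j = ∅
    · obtain ⟨j0, hj0⟩ := h0
      have hj00 : j0 = ⟨0, by omega⟩ := by
        by_contra hcc
        have hlt : (⟨0, by omega⟩ : Fin (k+1)) < j0 := by
          rw [Fin.lt_def]
          exact Nat.pos_of_ne_zero (fun h => hcc (Fin.ext h))
        have h2 := hV1 hlt
        rw [hj0] at h2
        exact Finset.not_ssubset_empty _ h2
      have hmem1 : ∀ j : Fin (k+1), (j : ℕ) ≠ 0 → V j ∈ F \ minimalsIn F := by
        intro j hj
        rcases Finset.mem_insert.mp (hV2 j) with h | h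
        · exfalso
          have : j = j0 := hV1.injective (h.trans hj0.symm)
          rw [hj00] at this
          exact hj (by rw [this])
        · exact h
      have hV1mem := hmem1 ⟨1, by omega⟩ (by simp)
      rw [Finset.mem_sdiff] at hV1mem
      have hnm := hV1mem.2
      rw [mem_minimalsIn] at hnm
      push_neg at hnm
      obtain ⟨B, hBF, hBsub, hBne⟩ := hnm hV1mem.1
      apply hsat.2.1
      refine ⟨fun j => if (j : ℕ) = 0 then B else V j, strictMono_of_adj _ ?_, ?_⟩
      · intro i hi
        by_cases h1 : i = 0
        · subst h1
          simp only [if_pos rfl, if_neg (by omega : ¬ (0+1 = 0))]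
          exact Finset.ssubset_iff_subset_ne.mpr ⟨hBsub, hBne⟩
        · simp only [if_neg h1, if_neg (by omega : ¬ (i+1 = 0))]
          exact hV1 (by rw [Fin.mk_lt_mk]; omega)
      · intro j
        by_cases h1 : (j : ℕ) = 0
        · simp only [if_pos h1]; exact hBF
        · simp only [if_neg h1]
          exact (Finset.mem_sdiff.mp (hmem1 j h1)).1
    · push_neg at h0
      apply hsat.2.1
      refine ⟨V, hV1, fun j => ?_⟩
      rcases Finset.mem_insert.mp (hV2 j) with h | h
      · exact absurd h (Finset.nonempty_iff_ne_empty.mp (h0 j))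
      · exact (Finset.mem_sdiff.mp h).1
  have hGsat : ∀ S ⊆ X, S ∉ G → HasChainOfLen (insert S G) (k+1) := by
    intro S hSX hSG
    have hSne : S ≠ ∅ := fun h => hSG (h ▸ Finset.mem_insert_self _ _)
    by_cases hSF : S ∈ F
    · -- S is a removed minimal set
      have hSmin : S ∈ minimalsIn F := by
        by_contra hcc
        exact hSG (Finset.mem_insert.mpr (Or.inr (Finset.mem_sdiff.mpr ⟨hSF, hcc⟩)))
      obtain ⟨C, hC1, hC2, hC0⟩ := hl_min hk hsat hH hSmin
      refine ⟨fun j : Fin (k+1) => if h : (j : ℕ) = 0 then ∅ else C ⟨(j : ℕ) - 1, by omega⟩,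
        strictMono_of_adj _ ?_, ?_⟩
      · intro i hi
        by_cases h1 : i = 0
        · subst h1
          simp only [dif_pos rfl, dif_neg (by omega : ¬ (0+1 = 0))]
          have he : (⟨0 + 1 - 1, by omega⟩ : Fin k) = ⟨0, by omega⟩ := rfl
          rw [he, hC0]
          exact Finset.ssubset_iff_subset_ne.mpr ⟨Finset.empty_subset _, fun h => hSne h.symm⟩
        · simp only [dif_neg h1, dif_neg (by omega : ¬ (i+1 = 0))]
          exact hC1 (by rw [Fin.mk_lt_mk]; omega)
      · intro j
        by_cases h1 : (j : ℕ) = 0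
        · simp only [dif_pos h1]
          exact Finset.mem_insert.mpr (Or.inr (Finset.mem_insert_self _ _))
        · simp only [dif_neg h1]
          by_cases h2 : (j : ℕ) = 1
          · have he : (⟨(j : ℕ) - 1, by omega⟩ : Fin k) = ⟨0, by omega⟩ := by
              rw [Fin.mk.injEq]; omega
            rw [he, hC0]
            exact Finset.mem_insert_self _ _
          · have hgt : (⟨0, by omega⟩ : Fin k) < ⟨(j : ℕ) - 1, by omega⟩ := by
              rw [Fin.mk_lt_mk]; omega
            have hss := hC1 hgt
            rw [hC0] at hss
            refine Finset.mem_insert.mpr (Or.inr (Finset.mem_insert.mpr (Or.inr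
              (Finset.mem_sdiff.mpr ⟨hC2 _, ?_⟩))))
            rw [mem_minimalsIn]
            push_neg
            intro _
            exact ⟨S, hSF, hss.subset, hss.ne⟩
    · -- S ∉ F
      obtain ⟨W, t, hW, hWm, hWt⟩ := sat_chain hsat.2.1 (hsat.2.2 S hSX hSF)
      have hinj := hW.injective
      have hne0 : ∀ j : Fin (k+1), (j : ℕ) ≠ 0 → W j ≠ ∅ := by
        intro j hj hc
        have hlt : (⟨0, by omega⟩ : Fin (k+1)) < j := by rw [Fin.lt_def]; show 0 < (j : ℕ); omega
        have := hW hlt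
        rw [hc] at this
        exact Finset.not_ssubset_empty _ this
      by_cases hbad : W ⟨0, by omega⟩ = S ∧ W ⟨1, by omega⟩ ∈ minimalsIn F
      · refine ⟨fun j => if (j : ℕ) = 0 then ∅ else if (j : ℕ) = 1 then S else W j,
          strictMono_of_adj _ ?_, ?_⟩
        · intro i hi
          by_cases h1 : i = 0
          · subst h1
            simp only [if_pos rfl, if_neg (by omega : ¬ (0+1 = 0)), if_pos (by omega : 0+1 = 1)]
            exact Finset.ssubset_iff_subset_ne.mpr ⟨Finset.empty_subset _, fun h => hSne h.symm⟩
          · by_cases h2 : i = 1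
            · subst h2
              simp only [if_neg (by omega : ¬ (1 = 0)), if_pos rfl,
                if_neg (by omega : ¬ (1+1 = 0)), if_neg (by omega : ¬ (1+1 = 1))]
              rw [← hbad.1]
              exact hW (by rw [Fin.mk_lt_mk]; omega)
            · simp only [if_neg h1, if_neg h2, if_neg (by omega : ¬ (i+1 = 0)),
                if_neg (by omega : ¬ (i+1 = 1))]
              exact hW (by rw [Fin.mk_lt_mk]; omega)
        · intro j
          by_cases h1 : (j : ℕ) = 0
          · simp only [if_pos h1]
            exact Finset.mem_insert.mpr (Or.inr (Finset.mem_insert_self _ _))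
          · by_cases h2 : (j : ℕ) = 1
            · simp only [if_neg h1, if_pos h2]
              exact Finset.mem_insert_self _ _
            · simp only [if_neg h1, if_neg h2]
              have hjF : W j ∈ F := by
                rcases hWm j with h | h
                · exfalso
                  have : j = ⟨0, by omega⟩ := hinj (h.trans hbad.1.symm)
                  exact h1 (by rw [this])
                · exact h
              have hW1F : W ⟨1, by omega⟩ ∈ F := (mem_minimalsIn.mp hbad.2).1
              have hss : W ⟨1, by omega⟩ ⊂ W j := hW (by rw [Fin.lt_def]; simp; omega)
              refine Finset.mem_insert.mpr (Or.inr (Finset.mem_insert.mpr (Or.inr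
                (Finset.mem_sdiff.mpr ⟨hjF, ?_⟩))))
              rw [mem_minimalsIn]
              push_neg
              intro _
              exact ⟨_, hW1F, hss.subset, hss.ne⟩
      · refine ⟨fun j => if (j : ℕ) = 0 then ∅ else W j, strictMono_of_adj _ ?_, ?_⟩
        · intro i hi
          by_cases h1 : i = 0
          · subst h1
            simp only [if_pos rfl, if_neg (by omega : ¬ (0+1 = 0))]
            have := hne0 ⟨1, by omega⟩ (by simp)
            exact Finset.ssubset_iff_subset_ne.mpr ⟨Finset.empty_subset _, fun h => this h.symm⟩
          · simp only [if_neg h1, if_neg (by omega : ¬ (i+1 = 0))]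
            exact hW (by rw [Fin.mk_lt_mk]; omega)
        · intro j
          by_cases h1 : (j : ℕ) = 0
          · simp only [if_pos h1]
            exact Finset.mem_insert.mpr (Or.inr (Finset.mem_insert_self _ _))
          · simp only [if_neg h1]
            rcases hWm j with h | h
            · rw [h]; exact Finset.mem_insert_self _ _
            · refine Finset.mem_insert.mpr (Or.inr (Finset.mem_insert.mpr (Or.inr
                (Finset.mem_sdiff.mpr ⟨h, ?_⟩))))
              rw [mem_minimalsIn]
              push_neg
              intro _
              rcases hWm ⟨0, by omega⟩ with h00 | h00
              · -- W 0 = S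
                by_cases hj1 : (j : ℕ) = 1
                · push_neg at hbad
                  have hj : j = ⟨1, by omega⟩ := Fin.ext (by omega : (j:ℕ) = 1)
                  have := hbad h00
                  rw [hj] at h ⊢
                  rw [mem_minimalsIn] at this
                  push_neg at this
                  exact this h
                · have hW1F : W ⟨1, by omega⟩ ∈ F := by
                    rcases hWm ⟨1, by omega⟩ with hcc | hcc
                    · exfalso
                      have : (⟨1, by omega⟩ : Fin (k+1)) = ⟨0, by omega⟩ :=
                        hinj (hcc.trans h00.symm)
                      rw [Fin.mk.injEq] at this
                      omega
                    · exact hcc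
                  have hss : W ⟨1, by omega⟩ ⊂ W j := hW (by rw [Fin.lt_def]; simp; omega)
                  exact ⟨_, hW1F, hss.subset, hss.ne⟩
              · have hss : W ⟨0, by omega⟩ ⊂ W j := hW (by rw [Fin.lt_def]; show 0 < (j : ℕ); omega)
                exact ⟨_, h00, hss.subset, hss.ne⟩
  -- Now use minimality of F
  have hmin' := hmin G ⟨hGX, hGsp, hGsat⟩
  have hsub : minimalsIn F ⊆ F := Finset.filter_subset _ _
  have hEnm : (∅ : Finset α) ∉ F \ minimalsIn F := fun hc => hE (Finset.mem_sdiff.mp hc).1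
  have hGcard : G.card = F.card - (minimalsIn F).card + 1 := by
    rw [hGdef, Finset.card_insert_of_notMem hEnm, Finset.card_sdiff_of_subset hsub]
  have hle : (minimalsIn F).card ≤ F.card := Finset.card_le_card hsub
  have hA0ne : (minimalsIn F).Nonempty := by
    obtain ⟨A, hA⟩ := F_nonempty hk hsat
    obtain ⟨M, hM, _⟩ := exists_minimal_below hA
    exact ⟨M, hM⟩
  have hcard1 : (minimalsIn F).card = 1 := by
    have := Finset.card_pos.mpr hA0ne
    omega
  obtain ⟨M, hMeq⟩ := Finset.card_eq_one.mp hcard1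
  have hMF : M ∈ F := hsub (by rw [hMeq]; exact Finset.mem_singleton_self M)
  have hallM : ∀ A ∈ F, M ⊆ A := by
    intro A hA
    obtain ⟨M', hM', hM'A⟩ := exists_minimal_below hA
    rw [hMeq, Finset.mem_singleton] at hM'
    rw [← hM']; exact hM'A
  have hMne : M ≠ ∅ := fun h => hE (h ▸ hMF)
  have h2F : 2 ≤ F.card := two_le_F_card hk hn hbig hsat
  have hMX : M ≠ X := by
    intro hc
    have hFsub : F ⊆ {X} := by
      intro A hA
      exact Finset.mem_singleton.mpr
        (Finset.Subset.antisymm (hsat.1 A hA) (hc ▸ hallM A hA))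
    have := Finset.card_le_card hFsub
    rw [Finset.card_singleton] at this
    omega
  obtain ⟨y, hyX, hyM⟩ := Finset.exists_of_ssubset
    (Finset.ssubset_iff_subset_ne.mpr ⟨hsat.1 M hMF, hMX⟩)
  have hyF : ({y} : Finset α) ∉ F := by
    intro h
    rcases Finset.subset_singleton_iff.mp (hallM _ h) with h' | h'
    · exact hMne h'
    · exact hyM (by rw [h']; exact Finset.mem_singleton_self y)
  obtain ⟨W, t, hW, hWm, hWt⟩ := sat_chain hsat.2.1
    (hsat.2.2 {y} (Finset.singleton_subset_iff.mpr hyX) hyF)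
  have hinj := hW.injective
  have ht0 : t = ⟨0, by omega⟩ := by
    by_contra hcc
    have hlt : (⟨0, by omega⟩ : Fin (k+1)) < t := by
      rw [Fin.lt_def]
      exact Nat.pos_of_ne_zero (fun h => hcc (Fin.ext h))
    have hss := hW hlt
    rw [hWt] at hss
    have h0 : W ⟨0, by omega⟩ = ∅ := Finset.ssubset_singleton_iff.mp hss
    rcases hWm ⟨0, by omega⟩ with h | h
    · rw [h0] at h; exact (Finset.singleton_ne_empty y) h.symm
    · rw [h0] at h; exact hE h
  have hW0 : W ⟨0, by omega⟩ = {y} := by rw [← ht0]; exact hWt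
  have hWjF : ∀ j : Fin (k+1), (j : ℕ) ≠ 0 → W j ∈ F := by
    intro j hj
    rcases hWm j with h | h
    · exfalso
      have : j = ⟨0, by omega⟩ := hinj (h.trans hW0.symm)
      exact hj (by rw [this])
    · exact h
  have hy1 : y ∈ W ⟨1, by omega⟩ := by
    have hss : W ⟨0, by omega⟩ ⊂ W ⟨1, by omega⟩ := hW (by rw [Fin.mk_lt_mk]; omega)
    exact hss.subset (by rw [hW0]; exact Finset.mem_singleton_self y)
  apply hsat.2.1
  refine ⟨fun j => if (j : ℕ) = 0 then M else W j, strictMono_of_adj _ ?_, ?_⟩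
  · intro i hi
    by_cases h1 : i = 0
    · subst h1
      show M ⊂ W ⟨0+1, hi⟩
      refine Finset.ssubset_iff_subset_ne.mpr ⟨hallM _ (hWjF ⟨0+1, hi⟩ (by simp)), ?_⟩
      intro hc
      exact hyM (by rw [hc]; exact hy1)
    · simp only [if_neg h1, if_neg (by omega : ¬ (i+1 = 0))]
      exact hW (by rw [Fin.mk_lt_mk]; omega)
  · intro j
    by_cases h1 : (j : ℕ) = 0
    · simp only [if_pos h1]; exact hMF
    · simp only [if_neg h1]; exact hWjF j h1

end Aux4
section Aux5
set_option linter.unusedSectionVars false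
variable {α : Type*} [DecidableEq α]

lemma erase_ssubset_eq {X B : Finset α} {z : α} (hz : z ∈ X)
    (hss : X.erase z ⊂ B) (hBX : B ⊆ X) : B = X := by
  obtain ⟨w, hwB, hwS⟩ := Finset.exists_of_ssubset hss
  have hwz : w = z := by
    by_contra hc
    exact hwS (Finset.mem_erase.mpr ⟨hc, hBX hwB⟩)
  refine Finset.Subset.antisymm hBX ?_
  intro x hx
  by_cases hxz : x = z
  · rw [hxz, ← hwz]; exact hwB
  · exact hss.subset (Finset.mem_erase.mpr ⟨hxz, hx⟩)

lemma X_mem_of_min {X : Finset α} {F : Finset (Finset α)} {k n : ℕ} (hk : 2 ≤ k)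
    (hn : X.card = n) (hbig : 2 ^ F.card < n)
    (hsat : IsSatKSperner X F k)
    (hmin : ∀ G : Finset (Finset α), IsSatKSperner X G k → F.card ≤ G.card)
    {H : Finset α} (hH : IsHomogAtom X F H) : X ∈ F := by
  by_contra hXF
  set G : Finset (Finset α) := insert X (F \ maximalsIn F) with hGdef
  have hGX : ∀ A ∈ G, A ⊆ X := by
    intro A hA
    rcases Finset.mem_insert.mp hA with h | h
    · rw [h]
    · exact hsat.1 A (Finset.mem_sdiff.mp h).1
  have hGsp : ¬ HasChainOfLen G (k+1) := by
    rintro ⟨V, hV1, hV2⟩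
    by_cases h0 : ∃ j, V j = X
    · obtain ⟨j0, hj0⟩ := h0
      have hj00 : j0 = ⟨k, by omega⟩ := by
        by_contra hcc
        have hj0k : (j0 : ℕ) < k := by
          have := j0.isLt
          rcases Nat.lt_or_ge (j0 : ℕ) k with h | h
          · exact h
          · exact absurd (Fin.ext (by omega : (j0:ℕ) = k)) hcc
        have hlt : j0 < (⟨(j0 : ℕ) + 1, by omega⟩ : Fin (k+1)) := by
          rw [Fin.lt_def]; simp
        have h2 := hV1 hlt
        rw [hj0] at h2
        have h3 := hGX _ (hV2 ⟨(j0 : ℕ) + 1, by omega⟩)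
        exact lt_irrefl X (lt_of_lt_of_le h2 (Finset.le_iff_subset.mpr h3))
      have hmem1 : ∀ j : Fin (k+1), (j : ℕ) ≠ k → V j ∈ F \ maximalsIn F := by
        intro j hj
        rcases Finset.mem_insert.mp (hV2 j) with h | h
        · exfalso
          have : j = j0 := hV1.injective (h.trans hj0.symm)
          rw [hj00] at this
          exact hj (by rw [this])
        · exact h
      have hVk1 := hmem1 ⟨k-1, by omega⟩ (by simp; omega)
      rw [Finset.mem_sdiff] at hVk1
      have hnm := hVk1.2
      rw [mem_maximalsIn] at hnm
      push_neg at hnm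
      obtain ⟨B, hBF, hBsub, hBne⟩ := hnm hVk1.1
      apply hsat.2.1
      refine ⟨fun j => if (j : ℕ) = k then B else V j, strictMono_of_adj _ ?_, ?_⟩
      · intro i hi
        by_cases h1 : i + 1 = k
        · simp only [if_neg (by omega : ¬ (i = k)), if_pos h1]
          have he : (⟨i, by omega⟩ : Fin (k+1)) = ⟨k-1, by omega⟩ := by
            rw [Fin.mk.injEq]; omega
          rw [he]
          exact Finset.ssubset_iff_subset_ne.mpr ⟨hBsub, fun hc => hBne hc.symm⟩
        · simp only [if_neg (by omega : ¬ (i = k)), if_neg h1]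
          exact hV1 (by rw [Fin.mk_lt_mk]; omega)
      · intro j
        by_cases h1 : (j : ℕ) = k
        · simp only [if_pos h1]; exact hBF
        · simp only [if_neg h1]
          exact (Finset.mem_sdiff.mp (hmem1 j h1)).1
    · push_neg at h0
      apply hsat.2.1
      refine ⟨V, hV1, fun j => ?_⟩
      rcases Finset.mem_insert.mp (hV2 j) with h | h
      · exact absurd h (h0 j)
      · exact (Finset.mem_sdiff.mp h).1
  have hGsat : ∀ S ⊆ X, S ∉ G → HasChainOfLen (insert S G) (k+1) := by
    intro S hSX hSG
    have hSne : S ≠ X := fun h => hSG (h ▸ Finset.mem_insert_self _ _)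
    by_cases hSF : S ∈ F
    · -- S is a removed maximal set
      have hSmax : S ∈ maximalsIn F := by
        by_contra hcc
        exact hSG (Finset.mem_insert.mpr (Or.inr (Finset.mem_sdiff.mpr ⟨hSF, hcc⟩)))
      obtain ⟨C, hC1, hC2, hCk⟩ := hl_max hk hsat hH hSmax
      refine ⟨fun j : Fin (k+1) => if h : (j : ℕ) < k then C ⟨(j : ℕ), h⟩ else X,
        strictMono_of_adj _ ?_, ?_⟩
      · intro i hi
        by_cases h1 : i + 1 < k
        · simp only [dif_pos h1, dif_pos (by omega : i < k)]
          exact hC1 (by rw [Fin.mk_lt_mk]; omega)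
        · simp only [dif_neg h1, dif_pos (by omega : i < k)]
          have he : (⟨i, by omega⟩ : Fin k) = ⟨k-1, by omega⟩ := by
            rw [Fin.mk.injEq]; omega
          rw [he, hCk]
          exact Finset.ssubset_iff_subset_ne.mpr ⟨hSX, hSne⟩
      · intro j
        by_cases h1 : (j : ℕ) < k
        · simp only [dif_pos h1]
          by_cases h2 : (j : ℕ) = k - 1
          · have he : (⟨(j : ℕ), h1⟩ : Fin k) = ⟨k-1, by omega⟩ := by
              rw [Fin.mk.injEq]; omega
            rw [he, hCk]
            exact Finset.mem_insert_self _ _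
          · have hss : C ⟨(j : ℕ), h1⟩ ⊂ S := by
              rw [← hCk]
              exact hC1 (by rw [Fin.mk_lt_mk]; omega)
            refine Finset.mem_insert.mpr (Or.inr (Finset.mem_insert.mpr (Or.inr
              (Finset.mem_sdiff.mpr ⟨hC2 _, ?_⟩))))
            rw [mem_maximalsIn]
            push_neg
            intro _
            exact ⟨S, hSF, hss.subset, fun hc => hss.ne hc.symm⟩
        · simp only [dif_neg h1]
          exact Finset.mem_insert.mpr (Or.inr (Finset.mem_insert_self _ _))
    · -- S ∉ F
      obtain ⟨W, t, hW, hWm, hWt⟩ := sat_chain hsat.2.1 (hsat.2.2 S hSX hSF)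
      have hinj := hW.injective
      have hWjX : ∀ j : Fin (k+1), W j ⊆ X := by
        intro j
        rcases hWm j with h | h
        · rw [h]; exact hSX
        · exact hsat.1 _ h
      by_cases hbad : W ⟨k, by omega⟩ = S ∧ W ⟨k-1, by omega⟩ ∈ maximalsIn F
      · refine ⟨fun j => if (j : ℕ) = k then X else if (j : ℕ) = k-1 then S else W j,
          strictMono_of_adj _ ?_, ?_⟩
        · intro i hi
          by_cases h1 : i + 1 = k
          · simp only [if_neg (by omega : ¬ (i = k)), if_pos h1,
              if_pos (by omega : i = k-1), if_neg (by omega : ¬ (k = k-1))]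
            exact Finset.ssubset_iff_subset_ne.mpr ⟨hSX, hSne⟩
          · by_cases h2 : i + 1 = k - 1
            · simp only [if_neg (by omega : ¬ (i = k)), if_neg h1,
                if_neg (by omega : ¬ (i = k-1)), if_pos h2]
              rw [← hbad.1]
              exact hW (by rw [Fin.mk_lt_mk]; omega)
            · simp only [if_neg (by omega : ¬ (i = k)), if_neg h1,
                if_neg (by omega : ¬ (i = k-1)), if_neg h2]
              exact hW (by rw [Fin.mk_lt_mk]; omega)
        · intro j
          by_cases h1 : (j : ℕ) = k
          · simp only [if_pos h1]
            exact Finset.mem_insert.mpr (Or.inr (Finset.mem_insert_self _ _))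
          · by_cases h2 : (j : ℕ) = k - 1
            · simp only [if_neg h1, if_pos h2]
              exact Finset.mem_insert_self _ _
            · simp only [if_neg h1, if_neg h2]
              have hjF : W j ∈ F := by
                rcases hWm j with h | h
                · exfalso
                  have : j = ⟨k, by omega⟩ := hinj (h.trans hbad.1.symm)
                  exact h1 (by rw [this])
                · exact h
              have hWk1F : W ⟨k-1, by omega⟩ ∈ F := (mem_maximalsIn.mp hbad.2).1
              have hss : W j ⊂ W ⟨k-1, by omega⟩ := by
                apply hW
                rw [Fin.lt_def]
                have := j.isLt
                simp; omega
              refine Finset.mem_insert.mpr (Or.inr (Finset.mem_insert.mpr (Or.inr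
                (Finset.mem_sdiff.mpr ⟨hjF, ?_⟩))))
              rw [mem_maximalsIn]
              push_neg
              intro _
              exact ⟨_, hWk1F, hss.subset, fun hc => hss.ne hc.symm⟩
      · refine ⟨fun j => if (j : ℕ) = k then X else W j, strictMono_of_adj _ ?_, ?_⟩
        · intro i hi
          by_cases h1 : i + 1 = k
          · simp only [if_neg (by omega : ¬ (i = k)), if_pos h1]
            exact lt_of_lt_of_le (hW (show (⟨i, by omega⟩ : Fin (k+1)) < ⟨i+1, hi⟩ by
              rw [Fin.mk_lt_mk]; omega)) (Finset.le_iff_subset.mpr (hWjX _))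
          · simp only [if_neg (by omega : ¬ (i = k)), if_neg h1]
            exact hW (by rw [Fin.mk_lt_mk]; omega)
        · intro j
          by_cases h1 : (j : ℕ) = k
          · simp only [if_pos h1]
            exact Finset.mem_insert.mpr (Or.inr (Finset.mem_insert_self _ _))
          · simp only [if_neg h1]
            rcases hWm j with h | h
            · rw [h]; exact Finset.mem_insert_self _ _
            · refine Finset.mem_insert.mpr (Or.inr (Finset.mem_insert.mpr (Or.inr
                (Finset.mem_sdiff.mpr ⟨h, ?_⟩))))
              rw [mem_maximalsIn]
              push_neg
              intro _
              rcases hWm ⟨k, by omega⟩ with hkS | hkF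
              · by_cases hj : (j : ℕ) = k - 1
                · push_neg at hbad
                  have hjeq : j = ⟨k-1, by omega⟩ := Fin.ext (by omega : (j:ℕ) = k-1)
                  have hnm := hbad hkS
                  rw [mem_maximalsIn] at hnm
                  push_neg at hnm
                  rw [hjeq] at h ⊢
                  exact hnm h
                · have hWk1F : W ⟨k-1, by omega⟩ ∈ F := by
                    rcases hWm ⟨k-1, by omega⟩ with hcc | hcc
                    · exfalso
                      have : (⟨k-1, by omega⟩ : Fin (k+1)) = ⟨k, by omega⟩ :=
                        hinj (hcc.trans hkS.symm)
                      rw [Fin.mk.injEq] at this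
                      omega
                    · exact hcc
                  have hss : W j ⊂ W ⟨k-1, by omega⟩ := by
                    apply hW
                    rw [Fin.lt_def]
                    have := j.isLt
                    simp; omega
                  exact ⟨_, hWk1F, hss.subset, fun hc => hss.ne hc.symm⟩
              · have hss : W j ⊂ W ⟨k, by omega⟩ := by
                  apply hW
                  rw [Fin.lt_def]
                  have := j.isLt
                  simp; omega
                exact ⟨_, hkF, hss.subset, fun hc => hss.ne hc.symm⟩
  -- minimality count
  have hmin' := hmin G ⟨hGX, hGsp, hGsat⟩
  have hsub : maximalsIn F ⊆ F := Finset.filter_subset _ _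
  have hXnm : X ∉ F \ maximalsIn F := fun hc => hXF (Finset.mem_sdiff.mp hc).1
  have hGcard : G.card = F.card - (maximalsIn F).card + 1 := by
    rw [hGdef, Finset.card_insert_of_notMem hXnm, Finset.card_sdiff_of_subset hsub]
  have hle : (maximalsIn F).card ≤ F.card := Finset.card_le_card hsub
  have hA0ne : (maximalsIn F).Nonempty := by
    obtain ⟨A, hA⟩ := F_nonempty hk hsat
    obtain ⟨M, hM, _⟩ := exists_maximal_above hA
    exact ⟨M, hM⟩
  have hcard1 : (maximalsIn F).card = 1 := by
    have := Finset.card_pos.mpr hA0ne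
    omega
  obtain ⟨M, hMeq⟩ := Finset.card_eq_one.mp hcard1
  have hMF : M ∈ F := hsub (by rw [hMeq]; exact Finset.mem_singleton_self M)
  have hallM : ∀ A ∈ F, A ⊆ M := by
    intro A hA
    obtain ⟨M', hM', hM'A⟩ := exists_maximal_above hA
    rw [hMeq, Finset.mem_singleton] at hM'
    rw [← hM']; exact hM'A
  have h2F : 2 ≤ F.card := two_le_F_card hk hn hbig hsat
  have hMne : M ≠ ∅ := by
    intro hc
    have hFsub : F ⊆ {∅} := by
      intro A hA
      have := hallM A hA
      rw [hc] at this
      exact Finset.mem_singleton.mpr (Finset.subset_empty.mp this)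
    have := Finset.card_le_card hFsub
    rw [Finset.card_singleton] at this
    omega
  obtain ⟨z, hz⟩ := Finset.nonempty_iff_ne_empty.mpr hMne
  have hzX : z ∈ X := hsat.1 M hMF hz
  have hMX : M ≠ X := fun hc => hXF (hc ▸ hMF)
  set S := X.erase z with hSdef
  have hSX : S ⊆ X := Finset.erase_subset z X
  have hSF : S ∉ F := by
    intro h
    have hSM := hallM S h
    have hXM : X ⊆ M := by
      intro x hx
      by_cases hxz : x = z
      · rw [hxz]; exact hz
      · exact hSM (Finset.mem_erase.mpr ⟨hxz, hx⟩)
    exact hXF ((Finset.Subset.antisymm (hsat.1 M hMF) hXM) ▸ hMF)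
  obtain ⟨W, t, hW, hWm, hWt⟩ := sat_chain hsat.2.1 (hsat.2.2 S hSX hSF)
  have hinj := hW.injective
  have hWjX' : ∀ j : Fin (k+1), W j ⊆ X := by
    intro j
    rcases hWm j with h | h
    · rw [h]; exact hSX
    · exact hsat.1 _ h
  have hSneX : S ≠ X := by
    intro hc
    have : z ∈ S := by rw [hc]; exact hzX
    exact (Finset.notMem_erase z X) this
  have htk : t = ⟨k, by omega⟩ := by
    by_contra hcc
    have htlt : (t : ℕ) < k := by
      have := t.isLt
      rcases Nat.lt_or_ge (t : ℕ) k with h | h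
      · exact h
      · exact absurd (Fin.ext (by omega : (t:ℕ) = k)) hcc
    have hss : S ⊂ W ⟨(t : ℕ) + 1, by omega⟩ := by
      rw [← hWt]
      exact hW (by rw [Fin.lt_def]; simp)
    have hXeq : W ⟨(t : ℕ) + 1, by omega⟩ = X :=
      erase_ssubset_eq hzX hss (hWjX' _)
    rcases hWm ⟨(t : ℕ) + 1, by omega⟩ with h | h
    · exact hSneX (h.symm.trans hXeq)
    · rw [hXeq] at h; exact hXF h
  have hWjF : ∀ j : Fin (k+1), (j : ℕ) ≠ k → W j ∈ F := by
    intro j hj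
    rcases hWm j with h | h
    · exfalso
      have : j = t := hinj (h.trans hWt.symm)
      rw [htk] at this
      exact hj (by rw [this])
    · exact h
  apply hsat.2.1
  refine ⟨fun j => if (j : ℕ) = k then M else W j, strictMono_of_adj _ ?_, ?_⟩
  · intro i hi
    by_cases h1 : i + 1 = k
    · simp only [if_neg (by omega : ¬ (i = k)), if_pos h1]
      have hiF : W ⟨i, by omega⟩ ∈ F := hWjF _ (by simp; omega)
      refine Finset.ssubset_iff_subset_ne.mpr ⟨hallM _ hiF, ?_⟩
      intro hc
      have hzW : z ∉ W ⟨i, by omega⟩ := by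
        intro hzW
        have hsub2 : W ⟨i, by omega⟩ ⊆ S := by
          rw [← hWt, htk]
          exact (hW (show (⟨i, by omega⟩ : Fin (k+1)) < ⟨k, by omega⟩ by
            rw [Fin.mk_lt_mk]; omega)).subset
        exact (Finset.notMem_erase z X) (hsub2 hzW)
      exact hzW (by rw [hc]; exact hz)
    · simp only [if_neg (by omega : ¬ (i = k)), if_neg h1]
      exact hW (by rw [Fin.mk_lt_mk]; omega)
  · intro j
    by_cases h1 : (j : ℕ) = k
    · simp only [if_pos h1]; exact hMF
    · simp only [if_neg h1]; exact hWjF j h1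

end Aux5
set_option maxHeartbeats 1000000 in
theorem canonical_decomposition_sizes {α : Type*} [DecidableEq α]
    (X : Finset α) (F : Finset (Finset α)) (k n : ℕ) (hk : 2 ≤ k)
    (hn : X.card = n) (hbig : 2 ^ F.card < n)
    (hsat : IsSatKSperner X F k)
    (hmin : ∀ G : Finset (Finset α), IsSatKSperner X G k → F.card ≤ G.card)
    (H : Finset α) (hH : IsHomogAtom X F H) :
    canonDecomp F 0 = {(∅ : Finset α)} ∧ canonDecomp F (k - 1) = {X} ∧
      ∀ i, 1 ≤ i → i ≤ k - 2 →
        (∀ A ∈ smallSets (canonDecomp F i) H, i ≤ A.card) ∧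
        (∀ A ∈ largeSets (canonDecomp F i) H, A.card ≤ i + n - (k - 1)) := by
  have hemp : ∅ ∈ F := empty_mem_of_min hk hn hbig hsat hmin hH
  have hXF : X ∈ F := X_mem_of_min hk hn hbig hsat hmin hH
  have hno := hsat.2.1
  refine ⟨?_, ?_, ?_⟩
  · -- canonDecomp F 0 = {∅}
    rw [canonDecomp]
    ext A
    rw [mem_minimalsIn, Finset.mem_singleton]
    constructor
    · rintro ⟨hA, hAmin⟩
      exact (hAmin ∅ hemp (Finset.empty_subset A)).symm
    · rintro rfl
      exact ⟨hemp, fun B hB hBsub => Finset.subset_empty.mp hBsub⟩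
  · -- canonDecomp F (k-1) = {X}
    have hrest : canonRest F (k-1) = {X} := by
      apply Finset.Subset.antisymm
      · intro B hB
        rw [Finset.mem_singleton]
        by_contra hBX
        have hBF : B ∈ F := canonRest_subset_self F _ hB
        obtain ⟨C, hC1, hC2, hC3⟩ := canonRest_to_chain hB
        apply hno
        refine ⟨fun j : Fin (k+1) =>
          if h : (j : ℕ) < k-1 then C ⟨(j : ℕ), h⟩ else if (j : ℕ) = k-1 then B else X,
          strictMono_of_adj _ ?_, ?_⟩
        · intro i hi
          by_cases h1 : i + 1 < k-1
          · simp only [dif_pos h1, dif_pos (by omega : i < k-1)]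
            exact hC1 (by rw [Fin.mk_lt_mk]; omega)
          · by_cases h2 : i + 1 = k-1
            · simp only [dif_pos (by omega : i < k-1), dif_neg (by omega : ¬ (i+1 < k-1)),
                if_pos h2]
              exact hC3 _
            · by_cases h3 : i = k-1
              · simp only [dif_neg (by omega : ¬ (i < k-1)), if_pos h3,
                  dif_neg (by omega : ¬ (i+1 < k-1)), if_neg (by omega : ¬ (i+1 = k-1))]
                exact Finset.ssubset_iff_subset_ne.mpr ⟨hsat.1 B hBF, hBX⟩
              · exact absurd hi (by omega)
        · intro j
          by_cases h1 : (j : ℕ) < k-1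
          · simp only [dif_pos h1]; exact hC2 _
          · by_cases h2 : (j : ℕ) = k-1
            · simp only [dif_neg h1, if_pos h2]; exact hBF
            · simp only [dif_neg h1, if_neg h2]; exact hXF
      · intro B hB
        rw [Finset.mem_singleton] at hB
        subst hB
        obtain ⟨C, hC1, hC2, t, ht⟩ := lies_on_k_chain hk hsat hH hXF
        have htlt := t.isLt
        have htv : (t : ℕ) = k-1 := by
          by_contra hcc
          have hlt : t < (⟨(t : ℕ)+1, by omega⟩ : Fin k) := by
            rw [Fin.lt_def]; simp
          have hss := hC1 hlt
          rw [ht] at hss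
          have hsub := hsat.1 _ (hC2 ⟨(t : ℕ)+1, by omega⟩)
          exact lt_irrefl B (lt_of_lt_of_le hss (Finset.le_iff_subset.mpr hsub))
        apply chain_to_canonRest (fun j : Fin (k-1) => C ⟨(j : ℕ), by omega⟩)
        · intro a b hab
          exact hC1 (by rw [Fin.mk_lt_mk]; exact hab)
        · intro j
          exact hC2 _
        · intro j
          have hjlt := j.isLt
          have := hC1 (show (⟨(j : ℕ), by omega⟩ : Fin k) < t by rw [Fin.lt_def]; simp; omega)
          rwa [ht] at this
        · exact hXF
    rw [canonDecomp, hrest]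
    ext A
    rw [mem_minimalsIn, Finset.mem_singleton]
    constructor
    · rintro ⟨hA, _⟩
      exact hA
    · rintro rfl
      exact ⟨rfl, fun B hB _ => Finset.mem_singleton.mp hB⟩
  · intro i h1i hik
    constructor
    · -- small members
      intro A hA
      have hA1 : A ∈ canonDecomp F i := (Finset.mem_filter.mp hA).1
      rw [canonDecomp] at hA1
      exact card_le_of_mem_canonRest (mem_minimalsIn.mp hA1).1
    · -- large members
      intro A hA
      rw [largeSets, Finset.mem_filter] at hA
      obtain ⟨hA1, hHA⟩ := hA
      rw [canonDecomp] at hA1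
      have hA2 := mem_minimalsIn.mp hA1
      have hAF : A ∈ F := canonRest_subset_self F i hA2.1
      obtain ⟨C, hC1, hC2, t, ht⟩ := lies_on_k_chain hk hsat hH hAF
      have htlt := t.isLt
      have hti : (t : ℕ) ≤ i := by
        by_contra hcc
        push_neg at hcc
        have hchain : A ∈ canonRest F (t : ℕ) := by
          apply chain_to_canonRest (fun j : Fin ((t : ℕ)) => C ⟨(j : ℕ), by omega⟩)
          · intro a b hab
            exact hC1 (by rw [Fin.mk_lt_mk]; exact hab)
          · intro j
            exact hC2 _
          · intro j
            have hjlt := j.isLt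
            have := hC1 (show (⟨(j : ℕ), by omega⟩ : Fin k) < t by
              rw [Fin.lt_def]; show (j : ℕ) < (t : ℕ); omega)
            rwa [ht] at this
          · exact hAF
        have : A ∈ canonRest F (i+1) :=
          canonRest_anti (i := i+1) (j := (t : ℕ)) F (by omega) hchain
        rw [canonRest, Finset.mem_sdiff] at this
        exact this.2 hA1
      have hcard := chain_card_add_le hC1 t ⟨k-1, by omega⟩ (by rw [Fin.le_def]; simp; omega)
      rw [ht] at hcard
      have hsubX := hsat.1 _ (hC2 ⟨k-1, by omega⟩)
      have hcx := Finset.card_le_card hsubX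
      rw [hn] at hcx
      have hbv : ((⟨k-1, by omega⟩ : Fin k) : ℕ) = k-1 := rfl
      rw [hbv] at hcard
      omega
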